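/- If w and v are 0-free timed words (i.e., their event times are strictly increasing and strictly positive) and d(w,v) = 0, then w = v. Hence d restricted to 0-free timed words is a genuine metric. -/

import Mathlib

open scoped ENNReal

noncomputable def dirDist {α : Type*} (w v : List (α × ℝ)) : ℝ≥0∞ :=
  ⨆ i : Fin w.length, ⨅ j : {j : Fin v.length // (v.get j).1 = (w.get i).1},
    ENNReal.ofReal |(w.get i).2 - (v.get j.1).2|

noncomputable def tdist {α : Type*} (w v : List (α × ℝ)) : ℝ≥0∞ :=
  max (dirDist w v) (dirDist v w)

/-- A timed word is 0-free if its event times are strictly positive and strictly increasing. -/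
def ZeroFree {α : Type*} (w : List (α × ℝ)) : Prop :=
  (∀ e ∈ w, 0 < e.2) ∧ w.Chain' (fun a b => a.2 < b.2)

lemma exists_match {α : Type*} (w v : List (α × ℝ)) (h : dirDist w v = 0)
    (i : Fin w.length) : ∃ j : Fin v.length, v.get j = w.get i := by
  have h0 : (⨅ j : {j : Fin v.length // (v.get j).1 = (w.get i).1},
      ENNReal.ofReal |(w.get i).2 - (v.get j.1).2|) = 0 := by
    refine le_antisymm ?_ (zero_le)
    rw [← h]
    exact le_iSup (fun i : Fin w.length => ⨅ j : {j : Fin v.length // (v.get j).1 = (w.get i).1},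
      ENNReal.ofReal |(w.get i).2 - (v.get j.1).2|) i
  have hne : Nonempty {j : Fin v.length // (v.get j).1 = (w.get i).1} := by
    by_contra hc
    rw [not_nonempty_iff] at hc
    rw [iInf_of_empty] at h0
    exact ENNReal.top_ne_zero h0
  obtain ⟨j0, hj0⟩ := Finite.exists_min
    (fun j : {j : Fin v.length // (v.get j).1 = (w.get i).1} =>
      ENNReal.ofReal |(w.get i).2 - (v.get j.1).2|)
  have hle : ENNReal.ofReal |(w.get i).2 - (v.get j0.1).2| = 0 :=
    le_antisymm (h0 ▸ le_iInf hj0) (zero_le)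
  have habs : |(w.get i).2 - (v.get j0.1).2| ≤ 0 := ENNReal.ofReal_eq_zero.mp hle
  have heq : (v.get j0.1).2 = (w.get i).2 := by
    have h1 := abs_nonneg ((w.get i).2 - (v.get j0.1).2)
    have h2 := abs_eq_zero.mp (le_antisymm habs h1)
    linarith
  exact ⟨j0.1, Prod.ext j0.2 heq⟩

/-- On 0-free timed words, `d` is a genuine metric: `d(w,v) = 0` implies `w = v`. -/
theorem tdist_eq_zero_of_zeroFree {α : Type*} (w v : List (α × ℝ))
    (hw : ZeroFree w) (hv : ZeroFree v) (h : tdist w v = 0) : w = v := by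
  haveI : IsTrans (α × ℝ) (fun a b => a.2 < b.2) := ⟨fun _ _ _ h h' => lt_trans h h'⟩
  have hwv : dirDist w v = 0 := le_antisymm (le_trans (le_max_left _ _) h.le) (zero_le)
  have hvw : dirDist v w = 0 := le_antisymm (le_trans (le_max_right _ _) h.le) (zero_le)
  have hwmono : StrictMono (fun i : Fin w.length => (w.get i).2) := fun a b hab =>
    List.pairwise_iff_get.mp (List.isChain_iff_pairwise.mp hw.2) a b hab
  have hvmono : StrictMono (fun j : Fin v.length => (v.get j).2) := fun a b hab =>
    List.pairwise_iff_get.mp (List.isChain_iff_pairwise.mp hv.2) a b hab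
  choose f hf using exists_match w v hwv
  choose g hg using exists_match v w hvw
  have hfmono : StrictMono f := by
    intro a b hab
    have : (v.get (f a)).2 < (v.get (f b)).2 := by
      rw [hf a, hf b]; exact hwmono hab
    exact hvmono.lt_iff_lt.mp this
  have hgmono : StrictMono g := by
    intro a b hab
    have : (w.get (g a)).2 < (w.get (g b)).2 := by
      rw [hg a, hg b]; exact hvmono hab
    exact hwmono.lt_iff_lt.mp this
  have hlen : w.length = v.length := by
    have h1 : w.length ≤ v.length := by
      simpa using Fintype.card_le_of_injective f hfmono.injective
    have h2 : v.length ≤ w.length := by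
      simpa using Fintype.card_le_of_injective g hgmono.injective
    omega
  apply List.ext_get hlen
  intro n h1 h2
  have key : ∀ i : Fin w.length, ((f i : ℕ)) = (i : ℕ) := by
    set e : Fin v.length → Fin w.length := Fin.cast hlen.symm with he
    have hemono : StrictMono e := fun a b hab => hab
    have hcomp : StrictMono (e ∘ f) := hemono.comp hfmono
    haveI i1 : WellFoundedLT (Fin w.length) := inferInstance
    haveI i2 : WellFoundedGT (Fin w.length) := inferInstance
    intro i
    have ha : (i : ℕ) ≤ ((e (f i)) : ℕ) := @StrictMono.le_apply _ _ i1 _ hcomp i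
    have hb : ((e (f i)) : ℕ) ≤ (i : ℕ) := @StrictMono.apply_le _ _ i2 _ hcomp i
    have : ((e (f i)) : ℕ) = (f i : ℕ) := rfl
    omega
  have hkey := key ⟨n, h1⟩
  have hfn : f ⟨n, h1⟩ = ⟨n, h2⟩ := Fin.ext hkey
  have := hf ⟨n, h1⟩
  rw [hfn] at this
  exact this.symm
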